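/- Let F(t) = ((sin t)/t − 1)/t² for t > 0 and F(0) = −1/6. Then for all integers m ≥ 0 and N with 2N ≥ m, and all real t ≥ 0, | (1/m!) F⁽ᵐ⁾(t) − (1/m!) ∑_{⌈m/2⌉ ≤ k ≤ N} (−1)^{k+1} t^{2k−m} / ((2k−m)! (2k+1)(2k+2)(2k+3)) | ≤ (1/m!) e^t t^{2N+2−m} / (2N+2−m)!. -/

import Mathlib

open Real Finset

/-- `F(t) = ((sin t)/t - 1)/t²` for `t ≠ 0`, with `F(0) = -1/6`. -/
noncomputable def Ffun (t : ℝ) : ℝ :=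
  if t = 0 then -1 / 6 else (Real.sin t / t - 1) / t ^ 2

/-- Term of the series for the `m`-th derivative of `Ffun`. -/
noncomputable def fterm (m k : ℕ) (t : ℝ) : ℝ :=
  (-1) ^ (k + 1) * ((2 * k).descFactorial m : ℝ) * t ^ (2 * k - m) /
    ((2 * k + 3).factorial : ℝ)

lemma fterm_bound (m k : ℕ) {t R : ℝ} (hR : |t| ≤ R) (hR0 : 0 ≤ R) :
    |fterm m k t| ≤ R ^ (2 * k - m) / ((2 * k - m).factorial : ℝ) := by
  have key : ((2 * k).descFactorial m : ℝ) * ((2 * k - m).factorial : ℝ) ≤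
      ((2 * k + 3).factorial : ℝ) := by
    rcases le_or_gt m (2 * k) with h | h
    · have h1 : (2 * k - m).factorial * (2 * k).descFactorial m = (2 * k).factorial :=
        Nat.factorial_mul_descFactorial h
      have h2 : (2 * k).factorial ≤ (2 * k + 3).factorial :=
        Nat.factorial_le (by omega)
      have : (2 * k).descFactorial m * (2 * k - m).factorial ≤ (2 * k + 3).factorial := by
        rw [mul_comm, h1]; exact h2
      exact_mod_cast this
    · rw [Nat.descFactorial_eq_zero_iff_lt.mpr h]
      simp only [Nat.cast_zero, zero_mul]
      positivity
  have hfac : (0:ℝ) < ((2 * k - m).factorial : ℝ) := by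
    exact_mod_cast Nat.factorial_pos _
  have hfac3 : (0:ℝ) < ((2 * k + 3).factorial : ℝ) := by
    exact_mod_cast Nat.factorial_pos _
  have habs : |fterm m k t| =
      ((2 * k).descFactorial m : ℝ) * |t| ^ (2 * k - m) / ((2 * k + 3).factorial : ℝ) := by
    unfold fterm
    rw [abs_div, abs_mul, abs_mul, abs_pow, abs_pow, abs_neg, abs_one, one_pow, one_mul,
      Nat.abs_cast, Nat.abs_cast]
  rw [habs, div_le_div_iff₀ hfac3 hfac]
  have hpow : |t| ^ (2 * k - m) ≤ R ^ (2 * k - m) :=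
    pow_le_pow_left₀ (abs_nonneg t) hR _
  calc ((2 * k).descFactorial m : ℝ) * |t| ^ (2 * k - m) * ((2 * k - m).factorial : ℝ)
      ≤ ((2 * k).descFactorial m : ℝ) * R ^ (2 * k - m) * ((2 * k - m).factorial : ℝ) := by
        apply mul_le_mul_of_nonneg_right _ hfac.le
        exact mul_le_mul_of_nonneg_left hpow (by positivity)
    _ = ((2 * k).descFactorial m : ℝ) * ((2 * k - m).factorial : ℝ) * R ^ (2 * k - m) := by ring
    _ ≤ ((2 * k + 3).factorial : ℝ) * R ^ (2 * k - m) :=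
        mul_le_mul_of_nonneg_right key (by positivity)
    _ = R ^ (2 * k - m) * ((2 * k + 3).factorial : ℝ) := by ring

lemma summable_aux (m : ℕ) {R : ℝ} (hR : 0 ≤ R) :
    Summable (fun k : ℕ => R ^ (2 * k - m) / ((2 * k - m).factorial : ℝ)) := by
  rw [← summable_nat_add_iff m]
  have heq : ∀ k : ℕ, 2 * (k + m) - m = 2 * k + m := fun k => by omega
  simp only [heq]
  apply Summable.of_nonneg_of_le (fun k => by positivity)
    (f := fun k => R ^ m * ((R ^ 2) ^ k / (k.factorial : ℝ)))
  · intro k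
    have h1 : (k.factorial : ℝ) ≤ ((2 * k + m).factorial : ℝ) := by
      exact_mod_cast Nat.factorial_le (by omega)
    have h2 : (0:ℝ) < (k.factorial : ℝ) := by exact_mod_cast Nat.factorial_pos _
    have hnum : R ^ (2 * k + m) = R ^ m * (R ^ 2) ^ k := by
      rw [← pow_mul, ← pow_add]; ring_nf
    calc R ^ (2 * k + m) / ((2 * k + m).factorial : ℝ)
        ≤ R ^ (2 * k + m) / (k.factorial : ℝ) :=
          div_le_div_of_nonneg_left (by positivity) h2 h1
      _ = R ^ m * ((R ^ 2) ^ k / (k.factorial : ℝ)) := by rw [hnum]; ring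
  · exact (Real.summable_pow_div_factorial (R ^ 2)).mul_left _

lemma summable_fterm (m : ℕ) (t : ℝ) : Summable (fun k : ℕ => fterm m k t) := by
  apply Summable.of_norm_bounded (summable_aux m (abs_nonneg t))
  intro k
  exact fterm_bound m k le_rfl (abs_nonneg t)

lemma hasDerivAt_fterm (m k : ℕ) (t : ℝ) :
    HasDerivAt (fun x => fterm m k x) (fterm (m + 1) k t) t := by
  have h : HasDerivAt (fun x : ℝ => x ^ (2 * k - m))
      (((2 * k - m : ℕ) : ℝ) * t ^ (2 * k - m - 1)) t := hasDerivAt_pow _ t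
  have h2 := ((h.const_mul ((-1:ℝ) ^ (k + 1) * ((2 * k).descFactorial m : ℝ))).div_const
      ((2 * k + 3).factorial : ℝ))
  refine h2.congr_deriv ?_
  unfold fterm
  have he : 2 * k - (m + 1) = 2 * k - m - 1 := by omega
  have hd : (((2 * k).descFactorial (m + 1) : ℕ) : ℝ) =
      ((2 * k - m : ℕ) : ℝ) * ((2 * k).descFactorial m : ℝ) := by
    rw [Nat.descFactorial_succ]; push_cast; ring
  rw [he, hd]
  ring

/-- The `m`-th derivative series function. -/
noncomputable def Sfun (m : ℕ) (t : ℝ) : ℝ := ∑' k, fterm m k t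

lemma hasDerivAt_Sfun (m : ℕ) (t : ℝ) : HasDerivAt (Sfun m) (Sfun (m + 1) t) t := by
  have hopen : IsOpen (Metric.ball (0:ℝ) (|t| + 1)) := Metric.isOpen_ball
  have hconn : IsPreconnected (Metric.ball (0:ℝ) (|t| + 1)) :=
    (convex_ball _ _).isPreconnected
  have htmem : t ∈ Metric.ball (0:ℝ) (|t| + 1) := by
    refine Metric.mem_ball.mpr ?_
    rw [Real.dist_eq, sub_zero]
    linarith
  exact hasDerivAt_tsum_of_isPreconnected
    (summable_aux (m + 1) (by positivity : (0:ℝ) ≤ |t| + 1)) hopen hconn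
    (fun k y _ => hasDerivAt_fterm m k y)
    (fun k y hy => by
      have hyle : |y| ≤ |t| + 1 := by
        have := Metric.mem_ball.mp hy
        rw [Real.dist_eq, sub_zero] at this
        linarith
      exact fterm_bound (m + 1) k hyle (by positivity))
    htmem (summable_fterm m t) htmem

lemma Sfun_zero_eq : Ffun = Sfun 0 := by
  funext t
  by_cases h0 : t = 0
  · subst h0
    have hz : Sfun 0 0 = fterm 0 0 0 := by
      apply tsum_eq_single
      intro k hk
      unfold fterm
      have hzp : (0:ℝ) ^ (2 * k - 0) = 0 := by
        apply zero_pow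
        omega
      rw [hzp]; ring
    rw [hz]
    show Ffun 0 = fterm 0 0 0
    unfold fterm Ffun
    norm_num [Nat.factorial]
  · have hsin := Real.hasSum_sin t
    have hshift : HasSum (fun n : ℕ => (-1:ℝ) ^ (n + 1) * t ^ (2 * (n + 1) + 1) /
        ((2 * (n + 1) + 1).factorial : ℝ)) (Real.sin t - t) := by
      have := (hasSum_nat_add_iff' (f := fun n : ℕ =>
        (-1:ℝ) ^ n * t ^ (2 * n + 1) / ((2 * n + 1).factorial : ℝ)) 1).mpr hsin
      simpa [Nat.factorial] using this
    have ht3 : (t : ℝ) ^ 3 ≠ 0 := pow_ne_zero _ h0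
    have hmul : HasSum (fun n : ℕ => t ^ 3 * fterm 0 n t) (Real.sin t - t) := by
      convert hshift using 2 with n
      unfold fterm
      simp only [Nat.descFactorial_zero, Nat.cast_one, mul_one, Nat.sub_zero]
      have h1 : 2 * (n + 1) + 1 = 2 * n + 3 := by omega
      rw [h1]
      rw [show t ^ (2 * n + 3) = t ^ 3 * t ^ (2 * n) by ring]
      ring
    have : HasSum (fun n : ℕ => fterm 0 n t) ((Real.sin t - t) / t ^ 3) := by
      have := hmul.div_const (t ^ 3)
      have hf : (fun i => t ^ 3 * fterm 0 i t / t ^ 3) = fun n => fterm 0 n t :=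
        funext fun n => mul_div_cancel_left₀ _ ht3
      rwa [hf] at this
    have hS : Sfun 0 t = (Real.sin t - t) / t ^ 3 := this.tsum_eq
    rw [hS]
    unfold Ffun
    rw [if_neg h0, div_sub_one h0]
    ring

lemma iteratedDeriv_Ffun (m : ℕ) : iteratedDeriv m Ffun = Sfun m := by
  induction m with
  | zero => simpa [iteratedDeriv_zero] using Sfun_zero_eq
  | succ m ih =>
    funext t
    rw [iteratedDeriv_succ, ih]
    exact (hasDerivAt_Sfun m t).deriv

set_option maxHeartbeats 1000000 in
/-- Remainder bound for the Taylor-series computation of the `m`-th derivative of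
`F(t) = ((sin t)/t - 1)/t²`: for `2N ≥ m` and `t ≥ 0`,
`|(1/m!) F⁽ᵐ⁾(t) - S_F(t;N,m)| ≤ (1/m!) eᵗ t^{2N+2-m}/(2N+2-m)!`. -/
theorem Ffun_deriv_partial_sum_bound (m N : ℕ) (hmN : m ≤ 2 * N) (t : ℝ) (ht : 0 ≤ t) :
    |(1 / (m.factorial : ℝ)) * iteratedDeriv m Ffun t -
        (1 / (m.factorial : ℝ)) * ∑ k ∈ Finset.Icc ((m + 1) / 2) N,
          (-1 : ℝ) ^ (k + 1) * t ^ (2 * k - m) /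
            (((2 * k - m).factorial : ℝ) * (2 * k + 1) * (2 * k + 2) * (2 * k + 3))| ≤
      (1 / (m.factorial : ℝ)) * Real.exp t * t ^ (2 * N + 2 - m) /
        ((2 * N + 2 - m).factorial : ℝ) := by
  have habs : |t| = t := abs_of_nonneg ht
  -- the partial sum in the statement equals the partial sum of fterm over range (N+1)
  have hsub : Finset.Icc ((m + 1) / 2) N ⊆ Finset.range (N + 1) := by
    intro k hk
    simp only [Finset.mem_Icc, Finset.mem_range] at *
    omega
  have hzero : ∀ k ∈ Finset.range (N + 1), k ∉ Finset.Icc ((m + 1) / 2) N →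
      fterm m k t = 0 := by
    intro k hk hk2
    simp only [Finset.mem_Icc, Finset.mem_range, not_and, not_le] at hk hk2
    unfold fterm
    rw [Nat.descFactorial_eq_zero_iff_lt.mpr (by omega)]
    simp
  have hsum_eq : ∑ k ∈ Finset.Icc ((m + 1) / 2) N,
      (-1 : ℝ) ^ (k + 1) * t ^ (2 * k - m) /
        (((2 * k - m).factorial : ℝ) * (2 * k + 1) * (2 * k + 2) * (2 * k + 3))
      = ∑ k ∈ Finset.range (N + 1), fterm m k t := by
    rw [← Finset.sum_subset hsub hzero]
    apply Finset.sum_congr rfl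
    intro k hk
    simp only [Finset.mem_Icc] at hk
    have hm2k : m ≤ 2 * k := by omega
    unfold fterm
    have key : ((2 * k).descFactorial m : ℝ) *
        (((2 * k - m).factorial : ℝ) * (2 * k + 1) * (2 * k + 2) * (2 * k + 3)) =
        ((2 * k + 3).factorial : ℝ) := by
      have h1 : (2 * k - m).factorial * (2 * k).descFactorial m = (2 * k).factorial :=
        Nat.factorial_mul_descFactorial hm2k
      have h2 : (2 * k + 3).factorial =
          (2 * k).factorial * (2 * k + 1) * (2 * k + 2) * (2 * k + 3) := by
        rw [show 2 * k + 3 = (2 * k + 2) + 1 by ring, Nat.factorial_succ,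
          show 2 * k + 2 = (2 * k + 1) + 1 by ring, Nat.factorial_succ,
          Nat.factorial_succ]
        ring
      rw [← h1] at h2
      push_cast [h2]
      ring
    have hpos1 : (0:ℝ) < ((2 * k - m).factorial : ℝ) := by
      exact_mod_cast Nat.factorial_pos _
    have hne : (((2 * k - m).factorial : ℝ) * (2 * k + 1) * (2 * k + 2) * (2 * k + 3)) ≠ 0 := by
      positivity
    have hne3 : ((2 * k + 3).factorial : ℝ) ≠ 0 := by
      exact_mod_cast (Nat.factorial_pos _).ne'
    rw [div_eq_div_iff hne hne3, ← key]
    ring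
  rw [iteratedDeriv_Ffun, hsum_eq, ← mul_sub, abs_mul,
    abs_of_nonneg (by positivity : (0:ℝ) ≤ 1 / (m.factorial : ℝ))]
  have hrhs : (1 / (m.factorial : ℝ)) * Real.exp t * t ^ (2 * N + 2 - m) /
      ((2 * N + 2 - m).factorial : ℝ)
      = (1 / (m.factorial : ℝ)) *
        (Real.exp t * t ^ (2 * N + 2 - m) / ((2 * N + 2 - m).factorial : ℝ)) := by ring
  rw [hrhs]
  apply mul_le_mul_of_nonneg_left _ (by positivity)
  -- now bound |Sfun m t - partial sum| by the tail
  have hsummable := summable_fterm m t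
  have htail : Sfun m t - ∑ k ∈ Finset.range (N + 1), fterm m k t
      = ∑' i, fterm m (i + (N + 1)) t := by
    have := Summable.sum_add_tsum_nat_add (f := fun k => fterm m k t) (N + 1) hsummable
    unfold Sfun
    linarith [this]
  rw [htail]
  set M := 2 * N + 2 - m with hM
  -- summability facts
  have hsum2i : Summable (fun i : ℕ => t ^ (2 * i) / ((2 * i).factorial : ℝ)) := by
    have := summable_aux 0 ht
    simpa using this
  have hsumB : Summable (fun i : ℕ => t ^ M / (M.factorial : ℝ) *
      (t ^ (2 * i) / ((2 * i).factorial : ℝ))) := hsum2i.mul_left _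
  have hbound : ∀ i : ℕ, |fterm m (i + (N + 1)) t| ≤
      t ^ M / (M.factorial : ℝ) * (t ^ (2 * i) / ((2 * i).factorial : ℝ)) := by
    intro i
    have h1 : |fterm m (i + (N + 1)) t| ≤
        t ^ (2 * (i + (N + 1)) - m) / (((2 * (i + (N + 1)) - m)).factorial : ℝ) := by
      have := fterm_bound m (i + (N + 1)) (le_of_eq habs) ht
      simpa [habs] using this
    have hexp : 2 * (i + (N + 1)) - m = M + 2 * i := by omega
    rw [hexp] at h1
    refine h1.trans ?_
    have hfacs : (M.factorial : ℝ) * ((2 * i).factorial : ℝ) ≤ ((M + 2 * i).factorial : ℝ) := by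
      exact_mod_cast Nat.le_of_dvd (Nat.factorial_pos _)
        (Nat.factorial_mul_factorial_dvd_factorial_add M (2 * i))
    have hf1 : (0:ℝ) < (M.factorial : ℝ) := by exact_mod_cast Nat.factorial_pos _
    have hf2 : (0:ℝ) < ((2 * i).factorial : ℝ) := by exact_mod_cast Nat.factorial_pos _
    have hf3 : (0:ℝ) < ((M + 2 * i).factorial : ℝ) := by exact_mod_cast Nat.factorial_pos _
    rw [div_le_iff₀ hf3]
    rw [pow_add]
    calc t ^ M * t ^ (2 * i)
        = (t ^ M / (M.factorial : ℝ) * (t ^ (2 * i) / ((2 * i).factorial : ℝ))) *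
          ((M.factorial : ℝ) * ((2 * i).factorial : ℝ)) := by
          field_simp
      _ ≤ (t ^ M / (M.factorial : ℝ) * (t ^ (2 * i) / ((2 * i).factorial : ℝ))) *
          ((M + 2 * i).factorial : ℝ) := by
          apply mul_le_mul_of_nonneg_left hfacs (by positivity)
  have hsumtail : Summable (fun i : ℕ => fterm m (i + (N + 1)) t) :=
    (summable_nat_add_iff (N + 1)).mpr hsummable
  calc |∑' i, fterm m (i + (N + 1)) t|
      ≤ ∑' i, |fterm m (i + (N + 1)) t| := by
        simpa [Real.norm_eq_abs] using
          norm_tsum_le_tsum_norm (f := fun i => fterm m (i + (N + 1)) t)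
            (by simpa [Real.norm_eq_abs] using hsumtail.abs)
    _ ≤ ∑' i, (t ^ M / (M.factorial : ℝ) * (t ^ (2 * i) / ((2 * i).factorial : ℝ))) := by
        apply Summable.tsum_le_tsum hbound hsumtail.abs hsumB
    _ = t ^ M / (M.factorial : ℝ) * ∑' i, (t ^ (2 * i) / ((2 * i).factorial : ℝ)) := by
        rw [tsum_mul_left]
    _ ≤ t ^ M / (M.factorial : ℝ) * Real.exp t := by
        apply mul_le_mul_of_nonneg_left _ (by positivity)
        have hexpsum : HasSum (fun n : ℕ => t ^ n / (n.factorial : ℝ)) (Real.exp t) := by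
          rw [Real.exp_eq_exp_ℝ]
          exact NormedSpace.expSeries_div_hasSum_exp t
        have hinj : Function.Injective (fun i : ℕ => 2 * i) := fun a b hab => by
          simpa using hab
        have hout : ∀ c : ℕ, c ∉ Set.range (fun i : ℕ => 2 * i) →
            0 ≤ t ^ c / (c.factorial : ℝ) := fun c _ => by positivity
        exact hasSum_le_inj (fun i : ℕ => 2 * i) hinj hout (fun i => le_rfl)
          hsum2i.hasSum hexpsum
    _ = Real.exp t * t ^ M / (M.factorial : ℝ) := by ring
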